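/- (System GMM equivalence.) Under the hypotheses of the previous statement (existence of invertible C with CZ_{1i}' = Z_{1i}'U for all i), the system GMM estimator β̂_{K⁺} computed with first-differenced-plus-levels data (transformation K⁺ = diag(D,I)) equals the system GMM estimator β̂_{F⁺} computed with forward-orthogonal-deviations-plus-levels data (transformation F⁺ = diag(F,I) = U⁺K⁺), provided the same initial residuals e_i⁺ are used and all required matrix inverses exist. -/
import Mathlib


open Matrix

lemma vecMulVec_mulVec_left_right {n m : Type*} [Fintype m] (M : Matrix n m ℝ)
    (v w : m → ℝ) : vecMulVec (M *ᵥ v) (M *ᵥ w) = M * vecMulVec v w * Mᵀ := by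
  ext a b
  simp only [vecMulVec_apply, Matrix.mul_apply, Matrix.mulVec, dotProduct,
    Matrix.transpose_apply]
  rw [Finset.sum_mul_sum, Finset.sum_comm]
  refine Finset.sum_congr rfl fun d _ => ?_
  rw [Finset.sum_mul]
  refine Finset.sum_congr rfl fun c _ => ?_
  ring

/-- System GMM equivalence: if there exists an invertible `C` with `C Z_{1i}ᵀ = Z_{1i}ᵀ U`
for all `i`, then the system GMM estimator based on first-differenced-plus-levels data
(transformation `K⁺ = diag(D, I)`) equals the one based on forward-orthogonal-deviations-
plus-levels data (transformation `F⁺ = diag(F, I) = U⁺ K⁺`), using the same initial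
residuals, provided all indicated inverses exist. -/
theorem system_gmm_equivalence
    (N T p k1 k2 : ℕ) (hT : 2 ≤ T)
    (D F : Matrix (Fin (T - 1)) (Fin T) ℝ)
    (hD : ∀ (t : Fin (T - 1)) (s : Fin T),
      D t s = if (s : ℕ) = (t : ℕ) then -1 else if (s : ℕ) = (t : ℕ) + 1 then 1 else 0)
    (U : Matrix (Fin (T - 1)) (Fin (T - 1)) ℝ)
    (hUtri : U.BlockTriangular id)
    (hU : Uᵀ * U = (D * Dᵀ)⁻¹)
    (hF : F = U * D)
    (Z1 : Fin N → Matrix (Fin (T - 1)) (Fin k1) ℝ)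
    (Z2 : Fin N → Matrix (Fin T) (Fin k2) ℝ)
    (C : Matrix (Fin k1) (Fin k1) ℝ) (hC : IsUnit C)
    (hCZ : ∀ i, C * (Z1 i)ᵀ = (Z1 i)ᵀ * U)
    (Kp Fp : Matrix (Fin (T - 1) ⊕ Fin T) (Fin T ⊕ Fin T) ℝ)
    (hKp : Kp = fromBlocks D 0 0 (1 : Matrix (Fin T) (Fin T) ℝ))
    (hFp : Fp = fromBlocks F 0 0 (1 : Matrix (Fin T) (Fin T) ℝ))
    (Zp : Fin N → Matrix (Fin (T - 1) ⊕ Fin T) (Fin k1 ⊕ Fin k2) ℝ)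
    (hZp : ∀ i, Zp i = fromBlocks (Z1 i) 0 0 (Z2 i))
    (X : Fin N → Matrix (Fin T ⊕ Fin T) (Fin p) ℝ)
    (y e : Fin N → (Fin T ⊕ Fin T) → ℝ)
    (WK WF : Matrix (Fin k1 ⊕ Fin k2) (Fin k1 ⊕ Fin k2) ℝ)
    (hWK : WK = ∑ i, (Zp i)ᵀ * vecMulVec (Kp *ᵥ e i) (Kp *ᵥ e i) * Zp i)
    (hWF : WF = ∑ i, (Zp i)ᵀ * vecMulVec (Fp *ᵥ e i) (Fp *ᵥ e i) * Zp i)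
    (hWKu : IsUnit WK) (hWFu : IsUnit WF)
    (HK HF : Matrix (Fin p) (Fin p) ℝ)
    (hHK : HK = (∑ i, (Kp * X i)ᵀ * Zp i) * WK⁻¹ * (∑ i, (Zp i)ᵀ * (Kp * X i)))
    (hHF : HF = (∑ i, (Fp * X i)ᵀ * Zp i) * WF⁻¹ * (∑ i, (Zp i)ᵀ * (Fp * X i)))
    (hHKu : IsUnit HK) (hHFu : IsUnit HF)
    (βK βF : Fin p → ℝ)
    (hβK : βK = HK⁻¹ *ᵥ (((∑ i, (Kp * X i)ᵀ * Zp i) * WK⁻¹) *ᵥ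
      (∑ i, (Zp i)ᵀ *ᵥ (Kp *ᵥ y i))))
    (hβF : βF = HF⁻¹ *ᵥ (((∑ i, (Fp * X i)ᵀ * Zp i) * WF⁻¹) *ᵥ
      (∑ i, (Zp i)ᵀ *ᵥ (Fp *ᵥ y i)))) :
    βF = βK := by
  set Up : Matrix (Fin (T - 1) ⊕ Fin T) (Fin (T - 1) ⊕ Fin T) ℝ :=
    fromBlocks U 0 0 (1 : Matrix (Fin T) (Fin T) ℝ) with hUpdef
  set Cp : Matrix (Fin k1 ⊕ Fin k2) (Fin k1 ⊕ Fin k2) ℝ :=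
    fromBlocks C 0 0 (1 : Matrix (Fin k2) (Fin k2) ℝ) with hCpdef
  have hCpu : IsUnit Cp := by
    rw [Matrix.isUnit_iff_isUnit_det, hCpdef, Matrix.det_fromBlocks_zero₁₂,
      Matrix.det_one, mul_one]
    exact (Matrix.isUnit_iff_isUnit_det C).mp hC
  have hCpdet : IsUnit Cp.det := (Matrix.isUnit_iff_isUnit_det Cp).mp hCpu
  have hFpU : Fp = Up * Kp := by
    rw [hFp, hKp, hUpdef, Matrix.fromBlocks_multiply]
    simp [hF]
  have hZU : ∀ i, (Zp i)ᵀ * Up = Cp * (Zp i)ᵀ := by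
    intro i
    rw [hZp, hUpdef, hCpdef, Matrix.fromBlocks_transpose, Matrix.fromBlocks_multiply,
      Matrix.fromBlocks_multiply]
    simp [hCZ i]
  have hUZ : ∀ i, Upᵀ * Zp i = Zp i * Cpᵀ := by
    intro i
    have h := congrArg Matrix.transpose (hZU i)
    simpa [Matrix.transpose_mul] using h
  have hZF : ∀ i, (Zp i)ᵀ * Fp = Cp * ((Zp i)ᵀ * Kp) := by
    intro i
    rw [hFpU, ← Matrix.mul_assoc, hZU i, Matrix.mul_assoc]
  -- moment sums
  have hAF : (∑ i, (Zp i)ᵀ * (Fp * X i)) = Cp * (∑ i, (Zp i)ᵀ * (Kp * X i)) := by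
    rw [Matrix.mul_sum]
    apply Finset.sum_congr rfl
    intro i _
    rw [← Matrix.mul_assoc, hZF i, Matrix.mul_assoc, Matrix.mul_assoc]
  have hSF : (∑ i, (Fp * X i)ᵀ * Zp i) = (∑ i, (Kp * X i)ᵀ * Zp i) * Cpᵀ := by
    have h1 : (∑ i, (Fp * X i)ᵀ * Zp i) = (∑ i, (Zp i)ᵀ * (Fp * X i))ᵀ := by
      rw [Matrix.transpose_sum]
      simp [Matrix.transpose_mul]
    have h2 : (∑ i, (Kp * X i)ᵀ * Zp i) = (∑ i, (Zp i)ᵀ * (Kp * X i))ᵀ := by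
      rw [Matrix.transpose_sum]
      simp [Matrix.transpose_mul]
    rw [h1, hAF, Matrix.transpose_mul, h2]
  -- weight matrices
  have hWFW : WF = Cp * WK * Cpᵀ := by
    rw [hWF, hWK, Finset.mul_sum, Finset.sum_mul]
    apply Finset.sum_congr rfl
    intro i _
    have he : Fp *ᵥ e i = Up *ᵥ (Kp *ᵥ e i) := by
      rw [hFpU, Matrix.mulVec_mulVec]
    rw [he, vecMulVec_mulVec_left_right]
    calc (Zp i)ᵀ * (Up * vecMulVec (Kp *ᵥ e i) (Kp *ᵥ e i) * Upᵀ) * Zp i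
        = ((Zp i)ᵀ * Up) * vecMulVec (Kp *ᵥ e i) (Kp *ᵥ e i) * (Upᵀ * Zp i) := by
          simp only [Matrix.mul_assoc]
      _ = Cp * ((Zp i)ᵀ * vecMulVec (Kp *ᵥ e i) (Kp *ᵥ e i) * Zp i) * Cpᵀ := by
          rw [hZU i, hUZ i]
          simp only [Matrix.mul_assoc]
  have hCCt : Cpᵀ * Cpᵀ⁻¹ = 1 :=
    Matrix.mul_nonsing_inv _ (by rwa [Matrix.det_transpose])
  have hCiC : Cp⁻¹ * Cp = 1 := Matrix.nonsing_inv_mul _ hCpdet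
  have e1 : ∀ {m : Type} (A : Matrix (Fin k1 ⊕ Fin k2) m ℝ), Cpᵀ * (Cpᵀ⁻¹ * A) = A := by
    intro m A; rw [← Matrix.mul_assoc, hCCt, Matrix.one_mul]
  have e2 : ∀ {m : Type} (A : Matrix (Fin k1 ⊕ Fin k2) m ℝ), Cp⁻¹ * (Cp * A) = A := by
    intro m A; rw [← Matrix.mul_assoc, hCiC, Matrix.one_mul]
  have hWFinv : WF⁻¹ = Cpᵀ⁻¹ * WK⁻¹ * Cp⁻¹ := by
    rw [hWFW, Matrix.mul_inv_rev, Matrix.mul_inv_rev, ← Matrix.mul_assoc]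
  have hHFK : HF = HK := by
    rw [hHF, hHK, hSF, hAF, hWFinv]
    simp only [Matrix.mul_assoc]
    rw [e2, e1]
  -- data vectors
  have hvF : (∑ i, (Zp i)ᵀ *ᵥ (Fp *ᵥ y i)) = Cp *ᵥ (∑ i, (Zp i)ᵀ *ᵥ (Kp *ᵥ y i)) := by
    have h : ∀ i, (Zp i)ᵀ *ᵥ (Fp *ᵥ y i) = Cp *ᵥ ((Zp i)ᵀ *ᵥ (Kp *ᵥ y i)) := by
      intro i
      rw [Matrix.mulVec_mulVec, Matrix.mulVec_mulVec, Matrix.mulVec_mulVec, hZF i,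
        ← Matrix.mul_assoc]
    rw [Finset.sum_congr rfl fun i _ => h i]
    exact (map_sum (Matrix.mulVecLin Cp) _ _).symm
  rw [hβF, hβK, hHFK, hSF, hWFinv, hvF]
  simp only [Matrix.mulVec_mulVec]
  congr 1
  simp only [Matrix.mul_assoc]
  rw [hCiC, Matrix.mul_one, e1]
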